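/- arXiv:0712.0722 — 2 statements merged into one kernel-verified Lean document; each statement's English description precedes it below -/
import Mathlib

section
/- (Key estimate in the proof of the Feinstein lemma.) Let σ and Q be positive semidefinite operators and P, Π orthogonal projections on a finite-dimensional complex Hilbert space. Suppose Q ≤ P, QP = PQ, and P σ P ≤ c·1 for some real c ≥ 0. Then Tr[ σ (P − Q)^{1/2} P Π P (P − Q)^{1/2} ] ≤ c · Tr(Π). -/
open Matrix Filter
open scoped BigOperators ComplexOrder

noncomputable section

/-- Operators on the `n`-fold tensor power of a `d`-dimensional Hilbert space. -/
abbrev MatPow (d n : ℕ) := Matrix (Fin n → Fin d) (Fin n → Fin d) ℂ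

/-- A density matrix: positive semidefinite with unit trace. -/
def IsDensity {m : Type*} [Fintype m] (ρ : Matrix m m ℂ) : Prop :=
  ρ.PosSemidef ∧ ρ.trace = 1

/-- Loewner order `A ≤ B`. -/
def Loewner {m : Type*} [Fintype m] (A B : Matrix m m ℂ) : Prop := (B - A).PosSemidef

/-- An orthogonal projection. -/
def IsProjection {m : Type*} [Fintype m] (P : Matrix m m ℂ) : Prop :=
  P.IsHermitian ∧ P * P = P

/-- Positive semidefinite square root (zero on non-PSD input). -/
def psqrt {m : Type*} [Fintype m] [DecidableEq m] (A : Matrix m m ℂ) : Matrix m m ℂ :=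
  letI := Classical.propDecidable A.PosSemidef
  if h : A.PosSemidef then
    h.1.eigenvectorUnitary.1 * diagonal ((↑) ∘ (√·) ∘ h.1.eigenvalues) *
      (star h.1.eigenvectorUnitary : Matrix m m ℂ) else 0

/-- Fidelity `F(A,B) = Tr √(√A B √A)` of positive semidefinite operators. -/
def fidelity {m : Type*} [Fintype m] [DecidableEq m] (A B : Matrix m m ℂ) : ℝ :=
  ((psqrt (psqrt A * B * psqrt A)).trace).re

/-- The trace norm `Tr |A| = Tr √(Aᴴ A)`. -/
def traceNorm {m : Type*} [Fintype m] [DecidableEq m] (A : Matrix m m ℂ) : ℝ :=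
  ((psqrt (Aᴴ * A)).trace).re

/-- Von Neumann entropy `S(ρ) = -Tr(ρ log₂ ρ)` (via eigenvalues, base-2 logarithm). -/
def vnEntropy {m : Type*} [Fintype m] [DecidableEq m] (ρ : Matrix m m ℂ) : ℝ :=
  if h : ρ.IsHermitian then -∑ i, h.eigenvalues i * Real.logb 2 (h.eigenvalues i) else 0

/-- Linear maps from operators on an `a`-dimensional space to operators on a
`b`-dimensional space. -/
abbrev QChannelMap (a b : ℕ) := Matrix (Fin a) (Fin a) ℂ →ₗ[ℂ] Matrix (Fin b) (Fin b) ℂ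

/-- The Choi matrix of a linear map. -/
def choiMatrix {a b : ℕ} (Φ : QChannelMap a b) : Matrix (Fin a × Fin b) (Fin a × Fin b) ℂ :=
  Matrix.of fun p p' => Φ (Matrix.single p.1 p'.1 1) p.2 p'.2

/-- Completely positive (positive semidefinite Choi matrix) and trace preserving. -/
def IsCPTP {a b : ℕ} (Φ : QChannelMap a b) : Prop :=
  (choiMatrix Φ).PosSemidef ∧ ∀ ρ : Matrix (Fin a) (Fin a) ℂ, (Φ ρ).trace = ρ.trace

/-- The `n`-fold tensor product map `Φs 0 ⊗ ⋯ ⊗ Φs (n-1)`. -/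
def tensChan {a b : ℕ} (n : ℕ) (Φs : Fin n → QChannelMap a b) (ρ : MatPow a n) :
    MatPow b n :=
  Matrix.of fun y y' => ∑ x : Fin n → Fin a, ∑ x' : Fin n → Fin a,
    ρ x x' * ∏ k, Φs k (Matrix.single (x k) (x' k) 1) (y k) (y' k)

/-- The Markov weight `γ_{i₁} q_{i₁ i₂} ⋯ q_{i_{n-1} i_n}` of a trajectory. -/
def chainWt {I : Type*} (q : I → I → ℝ) (γ : I → ℝ) {n : ℕ} (i : Fin n → I) : ℝ :=
  ∏ k : Fin n, if k.val = 0 then γ (i k)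
    else q (i ⟨k.val - 1, Nat.lt_of_le_of_lt (Nat.pred_le _) k.isLt⟩) (i k)

/-- The memory channel `Φ^{(n)}` with Markovian correlated noise. -/
def memChan {I : Type*} [Fintype I] {a b : ℕ} (q : I → I → ℝ) (γ : I → ℝ)
    (Φ : I → QChannelMap a b) (n : ℕ) (ρ : MatPow a n) : MatPow b n :=
  ∑ i : Fin n → I, chainWt q γ i • tensChan n (fun k => Φ (i k)) ρ

/-- `γ_C = ∑_{i ∈ C} γ_i`. -/
def gammaC {I : Type*} [Fintype I] [DecidableEq I] (γ : I → ℝ) (C : Finset I) : ℝ :=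
  ∑ i ∈ C, γ i

/-- The channel `Φ_C^{(n)}` restricted to the class `C`. -/
def classChan {I : Type*} [Fintype I] [DecidableEq I] {a b : ℕ} (q : I → I → ℝ)
    (γ : I → ℝ) (Φ : I → QChannelMap a b) (C : Finset I) (n : ℕ) (ρ : MatPow a n) :
    MatPow b n :=
  (gammaC γ C)⁻¹ • ∑ i : Fin n → {x // x ∈ C},
    chainWt q γ (fun k => (i k : I)) • tensChan n (fun k => Φ (i k : I)) ρ

/-- The transition matrix of the Markov chain. -/
def qMatrix {I : Type*} [Fintype I] (q : I → I → ℝ) : Matrix I I ℝ := Matrix.of q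

/-- `j` is accessible from `i`. -/
def Accessible {I : Type*} [Fintype I] [DecidableEq I] (q : I → I → ℝ) (i j : I) : Prop :=
  ∃ n : ℕ, 0 < (qMatrix q ^ n) i j

/-- `i` and `j` communicate. -/
def Communicates {I : Type*} [Fintype I] [DecidableEq I] (q : I → I → ℝ) (i j : I) : Prop :=
  Accessible q i j ∧ Accessible q j i

/-- `C` is a communicating class. -/
def IsCommClass {I : Type*} [Fintype I] [DecidableEq I] (q : I → I → ℝ) (C : Finset I) :
    Prop :=
  ∃ i : I, ∀ j, j ∈ C ↔ Communicates q i j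

/-- The class `C` is aperiodic: for each of its states, the gcd of the return
times is `1`. -/
def IsAperiodicClass {I : Type*} [Fintype I] [DecidableEq I] (q : I → I → ℝ)
    (C : Finset I) : Prop :=
  ∀ i ∈ C, ∀ d : ℕ, (∀ n : ℕ, 0 < n → 0 < (qMatrix q ^ n) i i → d ∣ n) → d = 1

/-- The class `C` is a (deterministic) periodic cycle `i₀ → i₁ → ⋯ → i_{L-1} → i₀` of
period `L ≥ 2`, enumerated by the `L`-periodic function `e : ℕ → I`. -/
def IsPeriodicCycle {I : Type*} [Fintype I] [DecidableEq I] (q : I → I → ℝ)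
    (C : Finset I) (L : ℕ) (e : ℕ → I) : Prop :=
  2 ≤ L ∧ (∀ k, e (k + L) = e k) ∧ (∀ j, j ∈ C ↔ ∃ k < L, e k = j) ∧
    (∀ k k', k < L → k' < L → e k = e k' → k = k') ∧ ∀ k, q (e k) (e (k + 1)) = 1

/-- The branch channel `Φ_{C,i_k}^{(n)} = Φ_{i_k} ⊗ Φ_{i_{k+1}} ⊗ ⋯ ⊗ Φ_{i_{k+n-1}}`
of a periodic cycle enumerated by `e`, started at position `k`. -/
def cycleChan {I : Type*} {a b : ℕ} (Φ : I → QChannelMap a b) (e : ℕ → I) (k n : ℕ)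
    (ρ : MatPow a n) : MatPow b n :=
  tensChan n (fun r => Φ (e (k + r.val))) ρ

/-- A finite ensemble of density matrices. -/
def IsEnsemble {m : Type*} [Fintype m] {J : ℕ} (p : Fin J → ℝ)
    (ρ : Fin J → Matrix m m ℂ) : Prop :=
  (∀ j, 0 ≤ p j) ∧ ∑ j, p j = 1 ∧ ∀ j, IsDensity (ρ j)

/-- Mean Holevo quantity of an ensemble for an aperiodic class `C`. -/
def holevoAper {I : Type*} [Fintype I] [DecidableEq I] {a b : ℕ} (q : I → I → ℝ)
    (γ : I → ℝ) (Φ : I → QChannelMap a b) (C : Finset I) (n : ℕ) {J : ℕ}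
    (p : Fin J → ℝ) (ρ : Fin J → MatPow a n) : ℝ :=
  (1 / (n : ℝ)) * (vnEntropy (∑ j, p j • classChan q γ Φ C n (ρ j)) -
    ∑ j, p j * vnEntropy (classChan q γ Φ C n (ρ j)))

/-- Mean Holevo quantity of an ensemble for a periodic cycle of period `L`
enumerated by `e`. -/
def holevoCyc {I : Type*} {a b : ℕ} (Φ : I → QChannelMap a b) (e : ℕ → I) (L n : ℕ)
    {J : ℕ} (p : Fin J → ℝ) (ρ : Fin J → MatPow a n) : ℝ :=
  (1 / ((n : ℝ) * L)) * ∑ k : Fin L,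
    (vnEntropy (cycleChan Φ e k.val n (∑ j, p j • ρ j)) -
      ∑ j, p j * vnEntropy (cycleChan Φ e k.val n (ρ j)))

/-- The mean Holevo quantity `χ̄_C^{(n)}` of a communicating class. -/
def chibarC {I : Type*} [Fintype I] [DecidableEq I] {a b : ℕ} (q : I → I → ℝ)
    (γ : I → ℝ) (Φ : I → QChannelMap a b) (C : Finset I) (n : ℕ) {J : ℕ}
    (p : Fin J → ℝ) (ρ : Fin J → MatPow a n) : ℝ :=
  letI := Classical.propDecidable (∃ L e, IsPeriodicCycle q C L e)
  if h : ∃ L e, IsPeriodicCycle q C L e then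
    holevoCyc Φ h.choose_spec.choose h.choose n p ρ
  else holevoAper q γ Φ C n p ρ

/-- `χ̄_n`: the supremum over ensembles of the minimum over communicating classes
(of positive weight) of the mean Holevo quantities. -/
def chibar {I : Type*} [Fintype I] [DecidableEq I] {a b : ℕ} (q : I → I → ℝ)
    (γ : I → ℝ) (Φ : I → QChannelMap a b) (n : ℕ) : ℝ :=
  sSup {x : ℝ | ∃ (J : ℕ) (p : Fin J → ℝ) (ρ : Fin J → MatPow a n),
    IsEnsemble p ρ ∧
    x = sInf {y : ℝ | ∃ C : Finset I, IsCommClass q C ∧ 0 < gammaC γ C ∧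
      y = chibarC q γ Φ C n p ρ}}

/-- The `n`-use Holevo quantity of the memory channel. -/
def chiN {I : Type*} [Fintype I] {a b : ℕ} (q : I → I → ℝ) (γ : I → ℝ)
    (Φ : I → QChannelMap a b) (n : ℕ) : ℝ :=
  sSup {x : ℝ | ∃ (J : ℕ) (p : Fin J → ℝ) (ρ : Fin J → MatPow a n),
    IsEnsemble p ρ ∧
    x = (1 / (n : ℝ)) * (vnEntropy (∑ j, p j • memChan q γ Φ n (ρ j)) -
      ∑ j, p j * vnEntropy (memChan q γ Φ n (ρ j)))}

/-- A code: densities as codewords and a sub-POVM as decoder. -/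
def IsCode {a b : ℕ} (n N : ℕ) (ρ : Fin N → MatPow a n) (E : Fin N → MatPow b n) : Prop :=
  (∀ k, IsDensity (ρ k)) ∧ (∀ k, (E k).PosSemidef) ∧ Loewner (∑ k, E k) 1

/-- Average probability of error of a code for the memory channel. -/
def avgErr {I : Type*} [Fintype I] {a b : ℕ} (q : I → I → ℝ) (γ : I → ℝ)
    (Φ : I → QChannelMap a b) (n N : ℕ) (ρ : Fin N → MatPow a n)
    (E : Fin N → MatPow b n) : ℝ :=
  (1 / (N : ℝ)) * ∑ k, (1 - ((memChan q γ Φ n (ρ k) * E k).trace).re)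

/-- `R` is an achievable rate for the memory channel. -/
def AchievableRate {I : Type*} [Fintype I] {a b : ℕ} (q : I → I → ℝ) (γ : I → ℝ)
    (Φ : I → QChannelMap a b) (R : ℝ) : Prop :=
  0 ≤ R ∧ ∃ (N : ℕ → ℕ) (ρ : ∀ n, Fin (N n) → MatPow a n)
    (E : ∀ n, Fin (N n) → MatPow b n),
    (∀ n, IsCode n (N n) (ρ n) (E n)) ∧
    (∀ n : ℕ, (2 : ℝ) ^ ((n : ℝ) * R) ≤ (N n : ℝ)) ∧
    Tendsto (fun n => avgErr q γ Φ n (N n) (ρ n) (E n)) atTop (nhds 0)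

/-- The classical capacity: the supremum of achievable rates. -/
def capacity {I : Type*} [Fintype I] {a b : ℕ} (q : I → I → ℝ) (γ : I → ℝ)
    (Φ : I → QChannelMap a b) : ℝ :=
  sSup {R : ℝ | AchievableRate q γ Φ R}

/-- A stochastic matrix. -/
def IsStochastic {I : Type*} [Fintype I] (q : I → I → ℝ) : Prop :=
  (∀ i j, 0 ≤ q i j) ∧ ∀ i, ∑ j, q i j = 1

/-- An invariant probability distribution. -/
def IsInvariantDist {I : Type*} [Fintype I] (q : I → I → ℝ) (γ : I → ℝ) : Prop :=
  (∀ i, 0 ≤ γ i) ∧ ∑ i, γ i = 1 ∧ ∀ j, γ j = ∑ i, γ i * q i j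

/-- The chain is irreducible. -/
def IsIrreducibleChain {I : Type*} [Fintype I] [DecidableEq I] (q : I → I → ℝ) : Prop :=
  ∀ i j, Accessible q i j

/-- The chain is aperiodic. -/
def IsAperiodicChain {I : Type*} [Fintype I] [DecidableEq I] (q : I → I → ℝ) : Prop :=
  ∀ i : I, ∀ d : ℕ, (∀ n : ℕ, 0 < n → 0 < (qMatrix q ^ n) i i → d ∣ n) → d = 1

/-- The index of the `s`-th site of the `r`-th block. -/
def blockIdx {m l : ℕ} (r : Fin m) (s : Fin l) : Fin (m * l) :=
  ⟨r.val * l + s.val, by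
    have h1 := r.isLt
    have h2 := s.isLt
    calc r.val * l + s.val < r.val * l + l := Nat.add_lt_add_left h2 _
      _ = (r.val + 1) * l := by ring
      _ ≤ m * l := Nat.mul_le_mul_right _ h1⟩

/-- The tensor product `ρ 0 ⊗ ρ 1 ⊗ ⋯ ⊗ ρ (m-1)` of `m` states on `l` sites each. -/
def kronFam {d l : ℕ} {m : ℕ} (ρ : Fin m → MatPow d l) : MatPow d (m * l) :=
  Matrix.of fun x x' =>
    ∏ r : Fin m, ρ r (fun s => x (blockIdx r s)) (fun s => x' (blockIdx r s))

/-- The `m`-fold tensor power `ρ^{⊗ m}` of a state on `l` sites. -/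
def kronPow {d l : ℕ} (m : ℕ) (ρ : MatPow d l) : MatPow d (m * l) := kronFam fun _ => ρ

/-- The tensor product `τ 0 ⊗ ⋯ ⊗ τ (n-1)` of single-site states. -/
def kronSites {d n : ℕ} (τ : Fin n → Matrix (Fin d) (Fin d) ℂ) : MatPow d n :=
  Matrix.of fun x x' => ∏ r, τ r (x r) (x' r)

/-- The tensor product of a state on `a` sites and a state on `b` sites. -/
def kron2 {d a b : ℕ} (A : MatPow d a) (B : MatPow d b) : MatPow d (a + b) :=
  Matrix.of fun x x' =>
    A (fun s => x (Fin.castAdd b s)) (fun s => x' (Fin.castAdd b s)) *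
      B (fun t => x (Fin.natAdd a t)) (fun t => x' (Fin.natAdd a t))

/-- `A ⊗ 1 ⊗ B` on `(2m+k)·l` sites, where `A`, `B` act on the first and last `m·l`
sites respectively and the identity acts on the middle `k·l` sites. -/
def threeBlock {d : ℕ} (m k l : ℕ) (A B : MatPow d (m * l)) : MatPow d ((2 * m + k) * l) :=
  Matrix.of fun y y' =>
    A (fun s => y ⟨s.val, by
          have hs := s.isLt
          have h : m * l ≤ (2 * m + k) * l := Nat.mul_le_mul_right _ (by omega)
          omega⟩)
      (fun s => y' ⟨s.val, by
          have hs := s.isLt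
          have h : m * l ≤ (2 * m + k) * l := Nat.mul_le_mul_right _ (by omega)
          omega⟩) *
    (if (fun t : Fin (k * l) => y ⟨m * l + t.val, by
            have ht := t.isLt
            have h : (m + k) * l ≤ (2 * m + k) * l := Nat.mul_le_mul_right _ (by omega)
            have e : (m + k) * l = m * l + k * l := Nat.add_mul _ _ _
            omega⟩) =
        (fun t : Fin (k * l) => y' ⟨m * l + t.val, by
            have ht := t.isLt
            have h : (m + k) * l ≤ (2 * m + k) * l := Nat.mul_le_mul_right _ (by omega)
            have e : (m + k) * l = m * l + k * l := Nat.add_mul _ _ _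
            omega⟩)
      then (1 : ℂ) else 0) *
    B (fun s => y ⟨(m + k) * l + s.val, by
          have hs := s.isLt
          have e : (2 * m + k) * l = (m + k) * l + m * l := by
            rw [show 2 * m + k = (m + k) + m by omega, Nat.add_mul]
          omega⟩)
      (fun s => y' ⟨(m + k) * l + s.val, by
          have hs := s.isLt
          have e : (2 * m + k) * l = (m + k) * l + m * l := by
            rw [show 2 * m + k = (m + k) + m by omega, Nat.add_mul]
          omega⟩)

lemma psqrt_spec {n : Type*} [Fintype n] [DecidableEq n] {A : Matrix n n ℂ}
    (hA : A.PosSemidef) : (psqrt A).PosSemidef ∧ psqrt A * psqrt A = A := by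
  unfold psqrt
  rw [dif_pos hA]
  set U := hA.1.eigenvectorUnitary
  have hU : (star U : Matrix n n ℂ) * U = 1 := by simp
  constructor
  · have hD : (diagonal ((↑) ∘ (√·) ∘ hA.1.eigenvalues) : Matrix n n ℂ).PosSemidef :=
      PosSemidef.diagonal (fun i => by simp [Complex.zero_le_real, Real.sqrt_nonneg])
    have := hD.mul_mul_conjTranspose_same (U : Matrix n n ℂ)
    rwa [← Matrix.star_eq_conjTranspose] at this
  · have hDD : (diagonal ((↑) ∘ (√·) ∘ hA.1.eigenvalues) : Matrix n n ℂ) *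
        diagonal ((↑) ∘ (√·) ∘ hA.1.eigenvalues) = diagonal (RCLike.ofReal ∘ hA.1.eigenvalues) := by
      rw [diagonal_mul_diagonal]
      congr 1
      funext i
      simp only [Function.comp_apply]
      rw [← Complex.ofReal_mul, Real.mul_self_sqrt (hA.eigenvalues_nonneg i)]
      rfl
    rw [show (U : Matrix n n ℂ) * diagonal ((↑) ∘ (√·) ∘ hA.1.eigenvalues) * (star U : Matrix n n ℂ) *
        ((U : Matrix n n ℂ) * diagonal ((↑) ∘ (√·) ∘ hA.1.eigenvalues) * (star U : Matrix n n ℂ))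
        = (U : Matrix n n ℂ) * (diagonal ((↑) ∘ (√·) ∘ hA.1.eigenvalues) * ((star U : Matrix n n ℂ) * (U : Matrix n n ℂ)) *
          diagonal ((↑) ∘ (√·) ∘ hA.1.eigenvalues)) * (star U : Matrix n n ℂ) by
        simp only [Matrix.mul_assoc], hU, Matrix.mul_one, hDD]
    conv_rhs => rw [hA.1.spectral_theorem, Unitary.conjStarAlgAut_apply]

lemma psd_neg_eq_zero {n : Type*} [Fintype n] [DecidableEq n] {X : Matrix n n ℂ}
    (h1 : X.PosSemidef) (h2 : (-X).PosSemidef) : X = 0 := by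
  ext i j
  have hv : X *ᵥ Pi.single j 1 = 0 := by
    refine (h1.dotProduct_mulVec_zero_iff _).mp ?_
    refine le_antisymm ?_ (h1.dotProduct_mulVec_nonneg _)
    have h := h2.dotProduct_mulVec_nonneg (Pi.single j 1)
    rw [Matrix.neg_mulVec, dotProduct_neg] at h
    exact neg_nonneg.mp h
  have := congr_fun hv i
  simpa [Matrix.mulVec_single] using this

lemma psd_trace_re_nonneg {n : Type*} [Fintype n] [DecidableEq n] {X : Matrix n n ℂ}
    (h : X.PosSemidef) : 0 ≤ X.trace.re := by
  rw [Matrix.trace, Complex.re_sum]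
  refine Finset.sum_nonneg fun i _ => ?_
  have h0 : (0:ℂ) ≤ X i i := by
    have := h.dotProduct_mulVec_nonneg (Pi.single i 1)
    simpa [Matrix.mulVec_single, dotProduct, Pi.single_apply] using this
  simpa using (Complex.le_def.mp h0).1

lemma psd_smul_real {n : Type*} [Fintype n] {A : Matrix n n ℂ}
    (hA : A.PosSemidef) {c : ℝ} (hc : 0 ≤ c) : (c • A).PosSemidef := by
  refine PosSemidef.of_dotProduct_mulVec_nonneg ?_ ?_
  · show (c • A)ᴴ = c • A
    rw [Matrix.conjTranspose_smul, star_trivial, hA.1.eq]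
  · intro x
    rw [Matrix.smul_mulVec, dotProduct_smul]
    have := hA.dotProduct_mulVec_nonneg x
    rw [Complex.real_smul]
    exact mul_nonneg (by exact_mod_cast hc) this

set_option maxHeartbeats 1000000 in
/-- Key operator estimate in the proof of the Feinstein lemma. -/
theorem feinstein_key_estimate {d : ℕ} (σ Q P Pj : Matrix (Fin d) (Fin d) ℂ) (c : ℝ)
    (hσ : σ.PosSemidef) (hQ : Q.PosSemidef) (hP : IsProjection P) (hPj : IsProjection Pj)
    (hQP : Loewner Q P) (hcomm : Q * P = P * Q) (hc : 0 ≤ c)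
    (hPσP : Loewner (P * σ * P) ((c : ℝ) • (1 : Matrix (Fin d) (Fin d) ℂ))) :
    ((σ * (psqrt (P - Q) * (P * Pj * P) * psqrt (P - Q))).trace).re ≤
      c * (Pj.trace).re := by
  obtain ⟨hPh, hPP⟩ := hP
  obtain ⟨hPjh, hPjP⟩ := hPj
  have hPQ : (P - Q).PosSemidef := hQP
  have hps : psqrt (P - Q) = psqrt (P - Q) := rfl
  set S := psqrt (P - Q) with hSdef
  have hSps : S.PosSemidef := (psqrt_spec hPQ).1
  have hSH : S.IsHermitian := hSps.1
  have hSS : S * S = P - Q := (psqrt_spec hPQ).2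
  clear hSdef
  clear_value S
  have h1Ph : (1 - P)ᴴ = 1 - P := by
    rw [Matrix.conjTranspose_sub, Matrix.conjTranspose_one, hPh.eq]
  have h1PP : (1 - P) * P = 0 := by
    rw [sub_mul, one_mul, hPP, sub_self]
  -- X := (1-P) * Q * (1-P) = 0
  have hX1 : ((1 - P) * Q * (1 - P)).PosSemidef := by
    have h := hQ.conjTranspose_mul_mul_same (1 - P)
    rwa [h1Ph] at h
  have hX2 : (-((1 - P) * Q * (1 - P))).PosSemidef := by
    have h := hPQ.conjTranspose_mul_mul_same (1 - P)
    rw [h1Ph] at h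
    have e : (1 - P) * (P - Q) * (1 - P) = -((1 - P) * Q * (1 - P)) := by
      have e2 : (1 - P) * (P - Q) = -((1 - P) * Q) := by
        rw [mul_sub, h1PP, zero_sub]
      rw [e2, neg_mul]
    rwa [e] at h
  have hX0 : (1 - P) * Q * (1 - P) = 0 := psd_neg_eq_zero hX1 hX2
  -- Q * (1 - P) = 0
  have hB : (psqrt Q * (1 - P))ᴴ * (psqrt Q * (1 - P)) = (1 - P) * Q * (1 - P) := by
    rw [Matrix.conjTranspose_mul, h1Ph, (psqrt_spec hQ).1.1.eq, Matrix.mul_assoc,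
      ← Matrix.mul_assoc (psqrt Q), (psqrt_spec hQ).2, ← Matrix.mul_assoc]
  have hB0 : psqrt Q * (1 - P) = 0 :=
    Matrix.conjTranspose_mul_self_eq_zero.mp (hB.trans hX0)
  have hQ1P : Q * (1 - P) = 0 := by
    rw [← (psqrt_spec hQ).2, Matrix.mul_assoc, hB0, Matrix.mul_zero]
  have hQPQ : Q * P = Q := by
    have h := hQ1P
    rw [mul_sub, mul_one, sub_eq_zero] at h
    exact h.symm
  have hPQQ : P * Q = Q := by rw [← hcomm, hQPQ]
  -- (P - Q) * (1 - P) = 0  and  (1 - P) * (P - Q) = 0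
  have hPm1P : (P - Q) * (1 - P) = 0 := by
    rw [sub_mul, hQ1P, sub_zero, mul_sub, mul_one, hPP, sub_self]
  have h1PPm : (1 - P) * (P - Q) = 0 := by
    have := congrArg Matrix.conjTranspose hPm1P
    rwa [Matrix.conjTranspose_mul, h1Ph, hPQ.1.eq, Matrix.conjTranspose_zero] at this
  -- S * P = S and P * S = S
  have hR : (S * (1 - P))ᴴ * (S * (1 - P)) = 0 := by
    rw [Matrix.conjTranspose_mul, h1Ph, hSH.eq, Matrix.mul_assoc,
      ← Matrix.mul_assoc S, hSS, ← Matrix.mul_assoc, h1PPm, Matrix.zero_mul]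
  have hS1P : S * (1 - P) = 0 := Matrix.conjTranspose_mul_self_eq_zero.mp hR
  have hSP : S * P = S := by
    have h := hS1P
    rw [mul_sub, mul_one, sub_eq_zero] at h
    exact h.symm
  have hPS : P * S = S := by
    have := congrArg Matrix.conjTranspose hSP
    rwa [Matrix.conjTranspose_mul, hPh.eq, hSH.eq] at this
  -- sandwich simplification
  have hmid : S * (P * Pj * P) * S = S * Pj * S := by
    simp only [← Matrix.mul_assoc]
    rw [hSP, Matrix.mul_assoc, hPS]
  -- trace rewriting
  set M := S * σ * S with hMdef
  have htr : (σ * (S * Pj * S)).trace = (Pj * M * Pj).trace := by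
    have e1 : (σ * (S * Pj * S)).trace = (M * Pj).trace := by
      rw [show σ * (S * Pj * S) = (σ * S * Pj) * S by simp only [Matrix.mul_assoc],
        Matrix.trace_mul_comm (σ * S * Pj) S,
        show S * (σ * S * Pj) = M * Pj by simp only [hMdef, Matrix.mul_assoc]]
    have e2 : (Pj * M * Pj).trace = (M * Pj).trace := by
      rw [Matrix.trace_mul_comm (Pj * M) Pj, ← Matrix.mul_assoc, hPjP]
      exact Matrix.trace_mul_comm Pj M
    rw [e1, e2]
  -- M = S * (P * σ * P) * S
  have hMsand : S * (P * σ * P) * S = M := by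
    simp only [← Matrix.mul_assoc]
    rw [hSP, Matrix.mul_assoc (S * σ), hPS, hMdef]
  -- c • 1 - M is PSD
  have hK1 : (c • (P - Q) - M).PosSemidef := by
    have h := hPσP.conjTranspose_mul_mul_same S
    rw [hSH.eq] at h
    have e : S * ((c : ℝ) • (1 : Matrix (Fin d) (Fin d) ℂ) - P * σ * P) * S
        = c • (P - Q) - M := by
      rw [Matrix.mul_sub, Matrix.sub_mul, hMsand]
      congr 1
      rw [Matrix.mul_smul, Matrix.mul_one, Matrix.smul_mul, hSS]
    rwa [e] at h
  have h1mP : (1 - P).PosSemidef := by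
    have h := Matrix.posSemidef_conjTranspose_mul_self (1 - P)
    rw [h1Ph] at h
    have e : (1 - P) * (1 - P) = 1 - P := by
      rw [mul_sub, mul_one, h1PP, sub_zero]
    rwa [e] at h
  have hK2 : (c • ((1 : Matrix (Fin d) (Fin d) ℂ) - (P - Q))).PosSemidef := by
    have e : (1 : Matrix (Fin d) (Fin d) ℂ) - (P - Q) = (1 - P) + Q := by abel
    rw [e]
    exact psd_smul_real (h1mP.add hQ) hc
  have hK : ((c : ℝ) • (1 : Matrix (Fin d) (Fin d) ℂ) - M).PosSemidef := by
    have e : (c : ℝ) • (1 : Matrix (Fin d) (Fin d) ℂ) - M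
        = c • ((1 : Matrix (Fin d) (Fin d) ℂ) - (P - Q)) + (c • (P - Q) - M) := by
      rw [smul_sub]; abel
    rw [e]
    exact hK2.add hK1
  -- final trace inequality
  have hfin : (Pj * ((c : ℝ) • (1 : Matrix (Fin d) (Fin d) ℂ) - M) * Pj).PosSemidef := by
    have h := hK.conjTranspose_mul_mul_same Pj
    rwa [hPjh.eq] at h
  have hfin' := psd_trace_re_nonneg hfin
  have hexp : Pj * ((c : ℝ) • (1 : Matrix (Fin d) (Fin d) ℂ) - M) * Pj
      = c • Pj - Pj * M * Pj := by
    rw [Matrix.mul_sub, Matrix.sub_mul]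
    congr 1
    rw [Matrix.mul_smul, Matrix.mul_one, Matrix.smul_mul, hPjP]
  rw [hexp, Matrix.trace_sub, Matrix.trace_smul, Complex.sub_re, Complex.smul_re, smul_eq_mul] at hfin'
  rw [hps, hmid, htr]
  linarith

end
end

section
/- (Distinguishing two initial states of the same periodic class.) Let C = {i_0,…,i_{L−1}} ∈ 𝒞 be a periodic communicating class with period L, let i, i' ∈ C, and suppose there exist l ∈ {0,…,L−1} and a density matrix ω on H such that f := F(Φ_{i+l}(ω), Φ_{i'+l}(ω)) < 1 (indices taken mod L). Then F( Φ_{C,i}^{(m)}(ω^{⊗m}), Φ_{C,i'}^{(m)}(ω^{⊗m}) ) → 0 as m → ∞. -/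
open Matrix Filter
open scoped BigOperators ComplexOrder

noncomputable section

section AuxDistinguish

set_option maxHeartbeats 1600000

open scoped ComplexConjugate

local notation "⟪" x ", " y "⟫" => @inner ℂ _ _ x y

open scoped MatrixOrder

variable {m : Type*} [Fintype m] [DecidableEq m]

private lemma psqrt_of_psd {A : Matrix m m ℂ} (hA : A.PosSemidef) : psqrt A = CFC.sqrt A := by
  rw [psqrt, dif_pos hA, CFC.sqrt_eq_real_sqrt A (nonneg_iff_posSemidef.mpr hA),
    cfcₙ_eq_cfc (hf0 := Real.sqrt_zero), hA.1.cfc_eq]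
  simp [Matrix.IsHermitian.cfc, Unitary.conjStarAlgAut_apply]

private lemma psqrt_posSemidef {A : Matrix m m ℂ} (hA : A.PosSemidef) :
    (psqrt A).PosSemidef := by
  rw [psqrt_of_psd hA]; exact nonneg_iff_posSemidef.mp (CFC.sqrt_nonneg A)

private lemma psqrt_mul_self {A : Matrix m m ℂ} (hA : A.PosSemidef) : psqrt A * psqrt A = A := by
  rw [psqrt_of_psd hA]; exact CFC.sqrt_mul_sqrt_self A (nonneg_iff_posSemidef.mpr hA)

private lemma psqrt_eq_of_sq {A Q : Matrix m m ℂ} (hA : A.PosSemidef) (hQ : Q.PosSemidef)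
    (h : Q * Q = A) : psqrt A = Q := by
  rw [psqrt_of_psd hA]
  exact CFC.sqrt_unique h (nonneg_iff_posSemidef.mpr hQ)

private lemma trace_eq_re_of_herm {A : Matrix m m ℂ} (hA : A.IsHermitian) :
    A.trace = (A.trace.re : ℂ) := by
  have h := A.trace_conjTranspose
  rw [hA.eq] at h
  exact (Complex.conj_eq_iff_re.mp h.symm).symm

private lemma trace_re_nonneg_of_psd {A : Matrix m m ℂ} (hA : A.PosSemidef) :
    0 ≤ A.trace.re := by
  have : (0:ℂ) ≤ A.trace := by
    rw [Matrix.trace]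
    apply Finset.sum_nonneg
    intro i _
    have := (posSemidef_iff_dotProduct_mulVec.mp hA).2 (Pi.single i 1)
    simpa [Matrix.mulVec_single, dotProduct, Pi.single_apply] using this
  exact (Complex.nonneg_iff.mp this).1

private lemma kronSites_apply {d n : ℕ} (τ : Fin n → Matrix (Fin d) (Fin d) ℂ) (x x') :
    kronSites τ x x' = ∏ r, τ r (x r) (x' r) := rfl

private lemma kronSites_mul {d n : ℕ} (A B : Fin n → Matrix (Fin d) (Fin d) ℂ) :
    kronSites A * kronSites B = kronSites (fun r => A r * B r) := by
  ext x x'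
  simp only [Matrix.mul_apply, kronSites_apply, Matrix.mul_apply]
  rw [Fintype.prod_sum (fun r j => A r (x r) j * B r j (x' r))]
  congr 1; funext z
  rw [← Finset.prod_mul_distrib]

private lemma kronSites_conjTranspose {d n : ℕ} (A : Fin n → Matrix (Fin d) (Fin d) ℂ) :
    (kronSites A)ᴴ = kronSites (fun r => (A r)ᴴ) := by
  ext x x'
  simp only [Matrix.conjTranspose_apply, kronSites_apply, star_prod]

private lemma kronSites_posSemidef {d n : ℕ} {A : Fin n → Matrix (Fin d) (Fin d) ℂ}
    (hA : ∀ r, (A r).PosSemidef) : (kronSites A).PosSemidef := by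
  have h2 : (fun r => (psqrt (A r))ᴴ * psqrt (A r)) = A := by
    funext r
    rw [(psqrt_posSemidef (hA r)).isHermitian.eq, psqrt_mul_self (hA r)]
  have : kronSites A = (kronSites fun r => psqrt (A r))ᴴ * (kronSites fun r => psqrt (A r)) := by
    rw [kronSites_conjTranspose, kronSites_mul, h2]
  rw [this]
  exact Matrix.posSemidef_conjTranspose_mul_self _

private lemma kronSites_trace {d n : ℕ} (A : Fin n → Matrix (Fin d) (Fin d) ℂ) :
    (kronSites A).trace = ∏ r, (A r).trace := by
  simp only [Matrix.trace, Matrix.diag, kronSites_apply]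
  rw [Fintype.prod_sum (fun (r : Fin n) (j : Fin d) => A r j j)]

private lemma psqrt_kronSites {d n : ℕ} {A : Fin n → Matrix (Fin d) (Fin d) ℂ}
    (hA : ∀ r, (A r).PosSemidef) :
    psqrt (kronSites A) = kronSites (fun r => psqrt (A r)) := by
  apply psqrt_eq_of_sq (kronSites_posSemidef hA)
  · exact kronSites_posSemidef (fun r => psqrt_posSemidef (hA r))
  · rw [kronSites_mul]
    exact congrArg kronSites (funext fun r => psqrt_mul_self (hA r))

private lemma fid_mid_psd {A B : Matrix m m ℂ}
    (hA : A.PosSemidef) (hB : B.PosSemidef) : (psqrt A * B * psqrt A).PosSemidef := by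
  have := hB.mul_mul_conjTranspose_same (psqrt A)
  rwa [(psqrt_posSemidef hA).isHermitian.eq] at this

private lemma fidelity_nonneg (A B : Matrix m m ℂ) : 0 ≤ fidelity A B := by
  unfold fidelity
  by_cases h : (psqrt A * B * psqrt A).PosSemidef
  · exact trace_re_nonneg_of_psd (psqrt_posSemidef h)
  · rw [psqrt]
    rw [dif_neg h]
    simp

private lemma fidelity_kronSites {d n : ℕ} {A B : Fin n → Matrix (Fin d) (Fin d) ℂ}
    (hA : ∀ r, (A r).PosSemidef) (hB : ∀ r, (B r).PosSemidef) :
    fidelity (kronSites A) (kronSites B) = ∏ r, fidelity (A r) (B r) := by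
  have hM : ∀ r, (psqrt (A r) * B r * psqrt (A r)).PosSemidef :=
    fun r => fid_mid_psd (hA r) (hB r)
  have hMkron : psqrt (kronSites A) * kronSites B * psqrt (kronSites A)
      = kronSites fun r => psqrt (A r) * B r * psqrt (A r) := by
    rw [psqrt_kronSites hA, kronSites_mul, kronSites_mul]
  unfold fidelity
  rw [hMkron, psqrt_kronSites hM, kronSites_trace]
  have hre : ∀ r ∈ Finset.univ, (psqrt (psqrt (A r) * B r * psqrt (A r))).trace
      = (((psqrt (psqrt (A r) * B r * psqrt (A r))).trace.re : ℝ) : ℂ) :=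
    fun r _ => trace_eq_re_of_herm (psqrt_posSemidef (hM r)).isHermitian
  rw [Finset.prod_congr rfl hre, ← Complex.ofReal_prod, Complex.ofReal_re]



private lemma vecMulVec_mul_vecMulVec (a b c d : m → ℂ) :
    vecMulVec a b * vecMulVec c d = (b ⬝ᵥ c) • vecMulVec a d := by
  ext x z
  simp [Matrix.mul_apply, Matrix.vecMulVec_apply, dotProduct, Finset.sum_mul, Finset.mul_sum]
  apply Finset.sum_congr rfl
  intro k _
  ring

private lemma vecMulVec_conjTranspose (a : m → ℂ) :
    (vecMulVec a (star a))ᴴ = vecMulVec a (star a) := by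
  ext x z
  simp [Matrix.conjTranspose_apply, Matrix.vecMulVec_apply, mul_comm]

private lemma trace_mul_vecMulVec (B : Matrix m m ℂ) (w : m → ℂ) :
    (B * vecMulVec w (star w)).trace = star w ⬝ᵥ (B *ᵥ w) := by
  simp [Matrix.trace, Matrix.diag, Matrix.mul_apply, Matrix.vecMulVec_apply, dotProduct,
    Matrix.mulVec, Finset.mul_sum]
  apply Finset.sum_congr rfl; intro k _
  apply Finset.sum_congr rfl; intro x _
  ring

private lemma sum_cols_unitary_dot (U : Matrix.unitaryGroup m ℂ) (A : Matrix m m ℂ) :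
    ∑ i, star (fun x => U.1 x i) ⬝ᵥ (A *ᵥ fun x => U.1 x i) = A.trace := by
  have hU : U.1 * (star U.1) = 1 := Matrix.mem_unitaryGroup_iff.mp U.2
  have key : ∀ z x, ∑ i, U.1 z i * (starRingEnd ℂ) (U.1 x i) = (1 : Matrix m m ℂ) z x := by
    intro z x
    rw [← hU]
    simp [Matrix.mul_apply, Matrix.star_apply]
  calc ∑ i, star (fun x => U.1 x i) ⬝ᵥ (A *ᵥ fun x => U.1 x i)
      = ∑ i, ∑ x, ∑ z, (starRingEnd ℂ) (U.1 x i) * (A x z * U.1 z i) := by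
        simp [dotProduct, Matrix.mulVec, Finset.mul_sum]
    _ = ∑ x, ∑ z, A x z * ∑ i, U.1 z i * (starRingEnd ℂ) (U.1 x i) := by
        rw [Finset.sum_comm]
        apply Finset.sum_congr rfl; intro x _
        rw [Finset.sum_comm]
        apply Finset.sum_congr rfl; intro z _
        rw [Finset.mul_sum]
        apply Finset.sum_congr rfl; intro i _
        ring
    _ = A.trace := by
        simp only [key]
        simp [Matrix.trace, Matrix.one_apply, Finset.sum_ite_eq, mul_ite]

private lemma fidelity_le_one {A B : Matrix m m ℂ} (hA : A.PosSemidef) (hB : B.PosSemidef)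
    (hTA : A.trace = 1) (hTB : B.trace = 1) : fidelity A B ≤ 1 := by
  classical
  set S := psqrt A with hSdef
  set T := psqrt B with hTdef
  have hSps : S.PosSemidef := psqrt_posSemidef hA
  have hTps : T.PosSemidef := psqrt_posSemidef hB
  have hSH : Sᴴ = S := hSps.isHermitian
  have hTH : Tᴴ = T := hTps.isHermitian
  have hSS : S * S = A := psqrt_mul_self hA
  have hTT : T * T = B := psqrt_mul_self hB
  have hM : (S * B * S).PosSemidef := fid_mid_psd hA hB
  set lam := hM.1.eigenvalues with hlam
  set v : m → m → ℂ := fun i => ⇑(hM.1.eigenvectorBasis i) with hv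
  set ι : (m → ℂ) → EuclideanSpace ℂ m := fun x => (WithLp.equiv 2 (m → ℂ)).symm x with hι
  -- Step 1: fidelity A B = ∑ √λᵢ
  have step1 : fidelity A B = ∑ i, Real.sqrt (lam i) := by
    show ((psqrt (S * B * S)).trace).re = _
    rw [psqrt, dif_pos hM, Matrix.trace_mul_cycle,
      show (star hM.1.eigenvectorUnitary : Matrix m m ℂ) * hM.1.eigenvectorUnitary.1 = 1 from
        Unitary.coe_star_mul_self _, one_mul, Matrix.trace_diagonal]
    rw [Complex.re_sum]
    apply Finset.sum_congr rfl; intro i _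
    simp [Function.comp, ← hlam]
  -- orthonormality of eigenvectors
  have horth : ∀ i j, star (v i) ⬝ᵥ v j = if i = j then 1 else 0 := by
    intro i j
    have := (orthonormal_iff_ite.mp hM.1.eigenvectorBasis.orthonormal) i j
    rw [dotProduct_comm, hv]
    simpa [EuclideanSpace.inner_eq_star_dotProduct] using this
  -- eigen relation
  have heig : ∀ i, (S * B * S) *ᵥ v i = (lam i : ℂ) • v i := by
    intro i
    have h := hM.1.mulVec_eigenvectorBasis i
    rw [RCLike.real_smul_eq_coe_smul (K := ℂ)] at h
    exact h
  have hYHY : (T * S)ᴴ * (T * S) = S * B * S := by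
    rw [Matrix.conjTranspose_mul, hSH, hTH]
    rw [show S * T * (T * S) = S * (T * T) * S by noncomm_ring, hTT]
  set y : m → m → ℂ := fun i => (T * S) *ᵥ v i with hy
  have gram : ∀ i j, star (y i) ⬝ᵥ y j = (lam j : ℂ) * (if i = j then 1 else 0) := by
    intro i j
    rw [hy]
    rw [Matrix.star_mulVec, Matrix.dotProduct_mulVec, Matrix.vecMul_vecMul, hYHY,
      ← Matrix.dotProduct_mulVec, heig j, dotProduct_smul, horth i j]
    simp [smul_eq_mul]
  have inner_eq : ∀ a b : m → ℂ, ⟪ι a, ι b⟫ = star a ⬝ᵥ b := fun a b => dotProduct_comm b (star a)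
  have norm_sq : ∀ x : m → ℂ, ‖ι x‖ ^ 2 = (star x ⬝ᵥ x).re := by
    intro x
    rw [← inner_self_eq_norm_sq (𝕜 := ℂ) (ι x), inner_eq]
    rfl
  set nrm : m → ℝ := fun i => ‖ι (y i)‖ with hnrm
  have hnrm_sq : ∀ i, nrm i ^ 2 = lam i := by
    intro i
    rw [hnrm]
    simp only
    rw [norm_sq, gram i i]
    simp
  have hsqrt_nrm : ∀ i, Real.sqrt (lam i) = nrm i := by
    intro i
    rw [← hnrm_sq i, Real.sqrt_sq (norm_nonneg _)]
  -- the normalized vectors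
  set c : m → ℂ := fun i => ((nrm i)⁻¹ : ℝ) with hc
  set w : m → m → ℂ := fun i => c i • y i with hw
  have hw0 : ∀ i, nrm i = 0 → w i = 0 := by
    intro i h
    rw [hw]; simp only; rw [hc]; simp [h]
  have wgram : ∀ i j, star (w i) ⬝ᵥ w j
      = if i = j then (if nrm i = 0 then 0 else 1) else 0 := by
    intro i j
    rw [hw]
    simp only [star_smul, smul_dotProduct, dotProduct_smul]
    rw [gram i j]
    rcases eq_or_ne i j with rfl | hij
    · simp only [if_pos rfl]
      rcases eq_or_ne (nrm i) 0 with h0 | h0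
      · rw [hc]; simp [h0]
      · rw [if_neg h0, hc]
        simp only [star_trivial, Complex.star_def, Complex.conj_ofReal, smul_eq_mul, mul_one]
        rw [← hnrm_sq i]
        push_cast
        field_simp
    · simp [hij]
  -- nrm i = re ⟪ι (T *ᵥ w i), ι (S *ᵥ v i)⟫
  have keyre : ∀ i, nrm i = (star (T *ᵥ w i) ⬝ᵥ (S *ᵥ v i)).re := by
    intro i
    have h1 : star (T *ᵥ w i) ⬝ᵥ (S *ᵥ v i) = star (w i) ⬝ᵥ ((T * S) *ᵥ v i) := by
      rw [Matrix.star_mulVec, Matrix.dotProduct_mulVec, Matrix.vecMul_vecMul, hTH,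
        Matrix.dotProduct_mulVec]
    have h2 : star (w i) ⬝ᵥ ((T * S) *ᵥ v i) = c i * (lam i : ℂ) := by
      have hsplit : star (w i) ⬝ᵥ y i = star (c i) * (star (y i) ⬝ᵥ y i) := by
        rw [hw]
        simp [star_smul, smul_dotProduct, smul_eq_mul]
      rw [show ((T * S) *ᵥ v i) = y i from rfl, hsplit, gram i i, hc]
      simp [Complex.conj_ofReal]
    rw [h1, h2, hc]
    simp only
    rcases eq_or_ne (nrm i) 0 with h0 | h0
    · simp [h0]
    · rw [show ((((nrm i)⁻¹ : ℝ)) : ℂ) * ((lam i : ℝ) : ℂ) = (((nrm i)⁻¹ * lam i : ℝ) : ℂ) by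
        push_cast; ring, Complex.ofReal_re, ← hnrm_sq i]
      field_simp
  have bound_i : ∀ i, nrm i ≤ ‖ι (T *ᵥ w i)‖ * ‖ι (S *ᵥ v i)‖ := by
    intro i
    rw [keyre i]
    have := re_inner_le_norm (𝕜 := ℂ) (ι (T *ᵥ w i)) (ι (S *ᵥ v i))
    rwa [inner_eq] at this
  -- ∑ bᵢ² = 1
  have hsumb : ∑ i, ‖ι (S *ᵥ v i)‖ ^ 2 = 1 := by
    have hconv : ∀ i, ‖ι (S *ᵥ v i)‖ ^ 2 = (star (v i) ⬝ᵥ (A *ᵥ v i)).re := by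
      intro i
      rw [norm_sq]
      congr 1
      rw [Matrix.star_mulVec, Matrix.dotProduct_mulVec, Matrix.vecMul_vecMul, hSH, hSS]
      rw [← Matrix.dotProduct_mulVec]
    simp only [hconv]
    rw [← Complex.re_sum]
    have hcols : ∀ i, v i = fun x => (hM.1.eigenvectorUnitary : Matrix m m ℂ) x i := by
      intro i; funext x; rw [hv]; simp [Matrix.IsHermitian.eigenvectorUnitary_apply]
    rw [show ∑ i, star (v i) ⬝ᵥ (A *ᵥ v i)
        = ∑ i, star (fun x => (hM.1.eigenvectorUnitary : Matrix m m ℂ) x i) ⬝ᵥ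
            (A *ᵥ fun x => (hM.1.eigenvectorUnitary : Matrix m m ℂ) x i) by
      apply Finset.sum_congr rfl; intro i _; rw [← hcols i]]
    rw [sum_cols_unitary_dot hM.1.eigenvectorUnitary A, hTA]
    simp
  -- projection Q
  set Q : Matrix m m ℂ := ∑ i, vecMulVec (w i) (star (w i)) with hQ
  have hQH : Qᴴ = Q := by
    rw [hQ, Matrix.conjTranspose_sum]
    exact Finset.sum_congr rfl fun i _ => vecMulVec_conjTranspose (w i)
  have hQQ : Q * Q = Q := by
    rw [hQ, Finset.sum_mul_sum]
    have hterm : ∀ i j, vecMulVec (w i) (star (w i)) * vecMulVec (w j) (star (w j))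
        = (if i = j then (if nrm i = 0 then 0 else 1) else (0:ℂ)) •
            vecMulVec (w i) (star (w j)) := by
      intro i j
      rw [_root_.vecMulVec_mul_vecMulVec, wgram i j]
    apply Finset.sum_congr rfl; intro i _
    rw [Finset.sum_congr rfl fun j _ => hterm i j]
    simp only [ite_smul, zero_smul, one_smul]
    rw [Finset.sum_ite_eq Finset.univ i
      (fun j => if nrm i = 0 then 0 else vecMulVec (w i) (star (w j)))]
    simp only [Finset.mem_univ, if_pos]
    rcases eq_or_ne (nrm i) 0 with h0 | h0
    · rw [if_pos h0, hw0 i h0]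
      ext a b
      simp [Matrix.vecMulVec_apply]
    · rw [if_neg h0]
  have hRps : (1 - Q).PosSemidef := by
    have h1 : (1 - Q)ᴴ = 1 - Q := by
      rw [Matrix.conjTranspose_sub, hQH, Matrix.conjTranspose_one]
    have h2 : (1 - Q) * (1 - Q) = 1 - Q := by
      rw [Matrix.mul_sub, Matrix.sub_mul, Matrix.sub_mul, hQQ]
      simp only [Matrix.one_mul, Matrix.mul_one]
      abel
    have := Matrix.posSemidef_conjTranspose_mul_self (1 - Q)
    rwa [h1, h2] at this
  have htrBR : 0 ≤ ((B * (1 - Q)).trace).re := by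
    have hcyc : (B * (1 - Q)).trace = (T * (1 - Q) * Tᴴ).trace := by
      rw [hTH, ← hTT]
      rw [Matrix.trace_mul_comm, ← Matrix.mul_assoc, Matrix.trace_mul_comm (((1:Matrix m m ℂ) - Q) * T) T, ← Matrix.mul_assoc]
    rw [hcyc]
    exact trace_re_nonneg_of_psd (hRps.mul_mul_conjTranspose_same T)
  -- ∑ aᵢ² ≤ 1
  have hsuma : ∑ i, ‖ι (T *ᵥ w i)‖ ^ 2 ≤ 1 := by
    have hconv : ∀ i, ‖ι (T *ᵥ w i)‖ ^ 2 = ((B * vecMulVec (w i) (star (w i))).trace).re := by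
      intro i
      rw [norm_sq, trace_mul_vecMulVec]
      congr 1
      rw [Matrix.star_mulVec, Matrix.dotProduct_mulVec, Matrix.vecMul_vecMul, hTH, hTT,
        ← Matrix.dotProduct_mulVec]
    simp only [hconv]
    rw [← Complex.re_sum, ← Matrix.trace_sum, ← Finset.mul_sum, ← hQ]
    have hsplit : (B * Q).trace = B.trace - (B * (1 - Q)).trace := by
      rw [Matrix.mul_sub, Matrix.mul_one, Matrix.trace_sub]
      ring
    rw [hsplit, hTB]
    simp only [Complex.sub_re, Complex.one_re]
    linarith [htrBR]
  -- final Cauchy-Schwarz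
  rw [step1]
  simp only [hsqrt_nrm]
  have hfin : ∑ i, nrm i ≤ ∑ i, ‖ι (T *ᵥ w i)‖ * ‖ι (S *ᵥ v i)‖ :=
    Finset.sum_le_sum fun i _ => bound_i i
  have hcs := Finset.sum_mul_sq_le_sq_mul_sq Finset.univ
    (fun i => ‖ι (T *ᵥ w i)‖) (fun i => ‖ι (S *ᵥ v i)‖)
  have hnn : 0 ≤ ∑ i, ‖ι (T *ᵥ w i)‖ * ‖ι (S *ᵥ v i)‖ :=
    Finset.sum_nonneg fun i _ => mul_nonneg (norm_nonneg _) (norm_nonneg _)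
  nlinarith [hfin, hcs, hnn, hsuma, hsumb]

-- entrywise formula for channel application
private lemma channel_apply_eq {a b : ℕ} (Φ : QChannelMap a b) (ρ : Matrix (Fin a) (Fin a) ℂ)
    (y y' : Fin b) :
    Φ ρ y y' = ∑ x, ∑ x', ρ x x' * Φ (Matrix.single x x' 1) y y' := by
  conv_lhs => rw [Matrix.matrix_eq_sum_single ρ]
  rw [map_sum, Matrix.sum_apply]
  apply Finset.sum_congr rfl; intro x _
  rw [map_sum, Matrix.sum_apply]
  apply Finset.sum_congr rfl; intro x' _
  have hstd : Matrix.single x x' (ρ x x') = ρ x x' • Matrix.single x x' 1 := by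
    ext i j
    simp [Matrix.single, Matrix.smul_apply]
  rw [hstd, LinearMap.map_smul, Matrix.smul_apply, smul_eq_mul]

private lemma tensChan_kronSites {a b n : ℕ} (Φs : Fin n → QChannelMap a b)
    (τ : Fin n → Matrix (Fin a) (Fin a) ℂ) :
    tensChan n Φs (kronSites τ) = kronSites (fun k => Φs k (τ k)) := by
  ext y y'
  show ∑ x : Fin n → Fin a, ∑ x' : Fin n → Fin a,
      (∏ r, τ r (x r) (x' r)) * ∏ k, Φs k (Matrix.single (x k) (x' k) 1) (y k) (y' k)
    = ∏ k, Φs k (τ k) (y k) (y' k)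
  have hrhs : ∀ k, Φs k (τ k) (y k) (y' k)
      = ∑ pq : Fin a × Fin a, τ k pq.1 pq.2 *
          Φs k (Matrix.single pq.1 pq.2 1) (y k) (y' k) := by
    intro k
    rw [channel_apply_eq (Φs k) (τ k) (y k) (y' k), ← Fintype.sum_prod_type']
  calc ∑ x : Fin n → Fin a, ∑ x' : Fin n → Fin a,
      (∏ r, τ r (x r) (x' r)) * ∏ k, Φs k (Matrix.single (x k) (x' k) 1) (y k) (y' k)
      = ∑ x : Fin n → Fin a, ∑ x' : Fin n → Fin a,
        ∏ k, (τ k (x k) (x' k) * Φs k (Matrix.single (x k) (x' k) 1) (y k) (y' k)) := by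
        apply Finset.sum_congr rfl; intro x _
        apply Finset.sum_congr rfl; intro x' _
        rw [Finset.prod_mul_distrib]
    _ = ∑ p : (Fin n → Fin a) × (Fin n → Fin a),
        ∏ k, (τ k (p.1 k) (p.2 k) *
          Φs k (Matrix.single (p.1 k) (p.2 k) 1) (y k) (y' k)) := by
        rw [← Fintype.sum_prod_type']
    _ = ∑ g : Fin n → Fin a × Fin a,
        ∏ k, (τ k (g k).1 (g k).2 *
          Φs k (Matrix.single (g k).1 (g k).2 1) (y k) (y' k)) := by
        apply Fintype.sum_equiv (Equiv.arrowProdEquivProdArrow (Fin n) (fun _ => Fin a) (fun _ => Fin a)).symm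
        intro g
        rfl
    _ = ∏ k, ∑ pq : Fin a × Fin a, τ k pq.1 pq.2 *
          Φs k (Matrix.single pq.1 pq.2 1) (y k) (y' k) := by
        rw [Fintype.prod_sum]
    _ = ∏ k, Φs k (τ k) (y k) (y' k) := by
        apply Finset.prod_congr rfl; intro k _
        rw [hrhs k]

private lemma cptp_posSemidef {a b : ℕ} {Φ : QChannelMap a b} (hΦ : IsCPTP Φ)
    {ρ : Matrix (Fin a) (Fin a) ℂ} (hρ : ρ.PosSemidef) : (Φ ρ).PosSemidef := by
  obtain ⟨hC, -⟩ := hΦ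
  set R := psqrt ρ with hR
  have hRps : R.PosSemidef := psqrt_posSemidef hρ
  have hRH : Rᴴ = R := hRps.isHermitian
  have hRR : R * R = ρ := psqrt_mul_self hρ
  have hρ_eq : ∀ x x', ρ x x' = ∑ c, conj (R c x) * R c x' := by
    intro x x'
    rw [← hRR, Matrix.mul_apply]
    apply Finset.sum_congr rfl; intro c _
    rw [show conj (R c x) = Rᴴ x c from rfl, hRH]
  have hCH : ∀ p p' : Fin a × Fin b, conj (choiMatrix Φ p' p) = choiMatrix Φ p p' := by
    intro p p'
    rw [show conj (choiMatrix Φ p' p) = (choiMatrix Φ)ᴴ p p' from rfl, hC.isHermitian.eq]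
  rw [posSemidef_iff_dotProduct_mulVec]
  constructor
  · -- Hermitian
    show (Φ ρ)ᴴ = Φ ρ
    ext y y'
    rw [Matrix.conjTranspose_apply, channel_apply_eq Φ ρ y' y, channel_apply_eq Φ ρ y y']
    rw [star_sum, Finset.sum_comm]
    apply Finset.sum_congr rfl; intro x _
    rw [star_sum]
    apply Finset.sum_congr rfl; intro x' _
    have h1 : (star (Φ (Matrix.single x x' 1) y' y) : ℂ)
        = Φ (Matrix.single x' x 1) y y' := hCH (x', y) (x, y')
    have h2 : (star (ρ x x') : ℂ) = ρ x' x := by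
      have h := congrFun (congrFun hρ.isHermitian.eq x') x
      rw [← h]; rfl
    rw [star_mul', h1, h2]
  · -- positivity
    intro z
    have lhs1 : star z ⬝ᵥ (Φ ρ *ᵥ z) = ∑ y, ∑ y', ∑ x, ∑ x', ∑ c,
        conj (R c x * z y) * (choiMatrix Φ (x, y) (x', y') * (R c x' * z y')) := by
      simp only [dotProduct, Matrix.mulVec, Pi.star_apply]
      apply Finset.sum_congr rfl; intro y _
      rw [Finset.mul_sum]
      apply Finset.sum_congr rfl; intro y' _
      rw [channel_apply_eq Φ ρ y y']
      simp only [hρ_eq, Finset.sum_mul, Finset.mul_sum]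
      apply Finset.sum_congr rfl; intro x _
      apply Finset.sum_congr rfl; intro x' _
      apply Finset.sum_congr rfl; intro c _
      have : choiMatrix Φ (x, y) (x', y') = Φ (Matrix.single x x' 1) y y' := rfl
      rw [this]
      simp only [RCLike.star_def, _root_.map_mul]
      ring
    have rhs1 : ∀ c : Fin a, star (fun p : Fin a × Fin b => R c p.1 * z p.2) ⬝ᵥ
          (choiMatrix Φ *ᵥ fun p : Fin a × Fin b => R c p.1 * z p.2)
        = ∑ x, ∑ y, ∑ x', ∑ y',
          conj (R c x * z y) * (choiMatrix Φ (x, y) (x', y') * (R c x' * z y')) := by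
      intro c
      simp only [dotProduct, Matrix.mulVec, Pi.star_apply, Finset.mul_sum]
      rw [Fintype.sum_prod_type]
      apply Finset.sum_congr rfl; intro x _
      apply Finset.sum_congr rfl; intro y _
      rw [Fintype.sum_prod_type]
      apply Finset.sum_congr rfl; intro x' _
      apply Finset.sum_congr rfl; intro y' _
      simp only [RCLike.star_def]
    rw [lhs1]
    have swap : ∑ y, ∑ y', ∑ x, ∑ x', ∑ c,
        conj (R c x * z y) * (choiMatrix Φ (x, y) (x', y') * (R c x' * z y'))
        = ∑ c, ∑ x, ∑ y, ∑ x', ∑ y',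
        conj (R c x * z y) * (choiMatrix Φ (x, y) (x', y') * (R c x' * z y')) := by
      simp only [← Fintype.sum_prod_type']
      exact Fintype.sum_equiv
        (⟨fun s : Fin b × Fin b × Fin a × Fin a × Fin a =>
            (s.2.2.2.2, s.2.2.1, s.1, s.2.2.2.1, s.2.1),
          fun t : Fin a × Fin a × Fin b × Fin a × Fin b =>
            (t.2.2.1, t.2.2.2.2, t.2.1, t.2.2.2.1, t.1),
          fun s => rfl, fun t => rfl⟩ :
          (Fin b × Fin b × Fin a × Fin a × Fin a) ≃
            (Fin a × Fin a × Fin b × Fin a × Fin b)) _ _ (fun s => rfl)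
    rw [swap]
    refine Finset.sum_nonneg fun c _ => ?_
    rw [show (∑ x, ∑ y, ∑ x', ∑ y',
        conj (R c x * z y) * (choiMatrix Φ (x, y) (x', y') * (R c x' * z y')))
      = star (fun p : Fin a × Fin b => R c p.1 * z p.2) ⬝ᵥ
          (choiMatrix Φ *ᵥ fun p : Fin a × Fin b => R c p.1 * z p.2) from (rhs1 c).symm]
    exact (posSemidef_iff_dotProduct_mulVec.mp hC).2 _

end AuxDistinguish

/-- Distinguishing two initial states of the same periodic class. -/
theorem distinguish_states_periodic_class {I : Type} [Fintype I] [DecidableEq I] {dH dK : ℕ}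
    (q : I → I → ℝ) (γ : I → ℝ) (Φ : I → QChannelMap dH dK)
    (hq : IsStochastic q) (hγ : IsInvariantDist q γ) (hΦ : ∀ i, IsCPTP (Φ i))
    (C : Finset I) (hC : IsCommClass q C) (hγC : 0 < gammaC γ C)
    (L : ℕ) (e : ℕ → I) (hcyc : IsPeriodicCycle q C L e)
    (k₁ k₂ : ℕ) (hk₁ : k₁ < L) (hk₂ : k₂ < L) (l : ℕ) (hl : l < L)
    (ω : Matrix (Fin dH) (Fin dH) ℂ) (hω : IsDensity ω)
    (hfid : fidelity (Φ (e (k₁ + l)) ω) (Φ (e (k₂ + l)) ω) < 1) :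
    Tendsto (fun m : ℕ =>
        fidelity (cycleChan Φ e k₁ m (kronSites fun _ : Fin m => ω))
          (cycleChan Φ e k₂ m (kronSites fun _ : Fin m => ω)))
      atTop (nhds 0) := by
  have hωps : ω.PosSemidef := hω.1
  have hωtr : ω.trace = 1 := hω.2
  obtain ⟨hL2, hper, -, -, -⟩ := hcyc
  have hLpos : 0 < L := by omega
  have hperiod : ∀ k t : ℕ, e (k + t * L) = e k := by
    intro k t
    induction t with
    | zero => simp
    | succ t ih => rw [show k + (t + 1) * L = (k + t * L) + L by ring, hper, ih]
  set g : ℕ → ℝ := fun r => fidelity (Φ (e (k₁ + r)) ω) (Φ (e (k₂ + r)) ω) with hg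
  have hst_ps : ∀ i : I, (Φ i ω).PosSemidef := fun i => cptp_posSemidef (hΦ i) hωps
  have hst_tr : ∀ i : I, (Φ i ω).trace = 1 := fun i => by rw [(hΦ i).2 ω, hωtr]
  have hg0 : ∀ r, 0 ≤ g r := fun r => fidelity_nonneg _ _
  have hg1 : ∀ r, g r ≤ 1 := fun r =>
    fidelity_le_one (hst_ps _) (hst_ps _) (hst_tr _) (hst_tr _)
  have hgmod : ∀ j s : ℕ, g (j * L + s) = g s := by
    intro j s
    rw [hg]
    simp only
    rw [show k₁ + (j * L + s) = (k₁ + s) + j * L by ring, hperiod,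
      show k₂ + (j * L + s) = (k₂ + s) + j * L by ring, hperiod]
  have hFm : ∀ mm : ℕ,
      fidelity (cycleChan Φ e k₁ mm (kronSites fun _ : Fin mm => ω))
        (cycleChan Φ e k₂ mm (kronSites fun _ : Fin mm => ω))
      = ∏ r : Fin mm, g r.val := by
    intro mm
    unfold cycleChan
    rw [tensChan_kronSites, tensChan_kronSites]
    exact fidelity_kronSites (fun r => hst_ps _) (fun r => hst_ps _)
  set c : ℕ → ℕ := fun mm => ((Finset.range mm).filter (fun r => r % L = l)).card with hc
  have hbound : ∀ mm : ℕ, ∏ r : Fin mm, g r.val ≤ (g l) ^ (c mm) := by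
    intro mm
    rw [Fin.prod_univ_eq_prod_range (fun r => g r)]
    have hle : ∀ r ∈ Finset.range mm, g r ≤ (if r % L = l then g l else 1) := by
      intro r _
      by_cases h : r % L = l
      · rw [if_pos h]
        have hgr : g r = g l := by
          rw [show r = (r / L) * L + r % L by rw [mul_comm]; exact (Nat.div_add_mod r L).symm,
            hgmod, h]
        rw [hgr]
      · rw [if_neg h]; exact hg1 r
    calc ∏ r ∈ Finset.range mm, g r
        ≤ ∏ r ∈ Finset.range mm, (if r % L = l then g l else 1) :=
          Finset.prod_le_prod (fun r _ => hg0 r) hle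
      _ = (g l) ^ (c mm) := by
          rw [Finset.prod_ite, Finset.prod_const, Finset.prod_const_one, mul_one, hc]
  have hcmono : Monotone c := by
    intro m₁ m₂ h
    apply Finset.card_le_card
    exact Finset.filter_subset_filter _ (Finset.range_subset_range.mpr h)
  have hcunbdd : ∀ N : ℕ, N ≤ c (N * L + L) := by
    intro N
    have hmap : ∀ j ∈ Finset.range N,
        j * L + l ∈ (Finset.range (N * L + L)).filter (fun r => r % L = l) := by
      intro j hj
      rw [Finset.mem_filter, Finset.mem_range]
      have hj' : j < N := Finset.mem_range.mp hj
      constructor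
      · have h1 : j * L + L ≤ N * L := by
          calc j * L + L = (j + 1) * L := by ring
            _ ≤ N * L := Nat.mul_le_mul_right L hj'
        omega
      · rw [show j * L + l = l + j * L by ring, Nat.add_mul_mod_self_right,
          Nat.mod_eq_of_lt hl]
    have hinj : Set.InjOn (fun j => j * L + l) (Finset.range N) := by
      intro p _ r _ hpr
      simp only at hpr
      have : p * L = r * L := by omega
      exact Nat.eq_of_mul_eq_mul_right hLpos this
    calc N = (Finset.range N).card := (Finset.card_range N).symm
      _ ≤ c (N * L + L) := Finset.card_le_card_of_injOn _ hmap hinj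
  have hctend : Tendsto c atTop atTop := by
    apply tendsto_atTop_atTop_of_monotone hcmono
    intro b; exact ⟨b * L + L, hcunbdd b⟩
  have hf1 : g l < 1 := hfid
  have hpowtend : Tendsto (fun mm => (g l) ^ (c mm)) atTop (nhds 0) :=
    (tendsto_pow_atTop_nhds_zero_of_lt_one (hg0 l) hf1).comp hctend
  apply squeeze_zero (g := fun mm => (g l) ^ (c mm))
  · intro mm
    rw [hFm mm]
    exact Finset.prod_nonneg fun r _ => hg0 _
  · intro mm
    rw [hFm mm]
    exact hbound mm
  · exact hpowtend


end
end
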